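/- The number of distinct reachable stable configurations starting from k^ℓ labeled chips on the root of the infinite directed k-ary tree equals the product ∏_{i=0}^{ℓ−1} (C_{k, k^{ℓ−1−i}})^{k^i}, that is, C_{k,k^{ℓ−1}} · C_{k,k^{ℓ−2}}^{k} · C_{k,k^{ℓ−3}}^{k^2} ⋯ C_{k,k}^{k^{ℓ−2}} · C_{k,1}^{k^{ℓ−1}}. -/

import Mathlib

/-- A firing step for `N` labeled chips on the infinite directed `k`-ary tree with
vertex set `{1, 2, 3, …}`, root `1`, where the `j`-th child (`1 ≤ j ≤ k`) of vertex `v`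
is `k*(v-1)+j+1`.  A configuration assigns to each chip (element of `Fin N`,
representing labels `1,…,N`) a vertex.  A step picks `k` chips `t 0 < t 1 < ⋯ < t (k-1)`
all on a common vertex `v` and sends the `j`-th smallest to the `j`-th child. -/
def FireStep (k N : ℕ) (c c' : Fin N → ℕ) : Prop :=
  ∃ (v : ℕ) (t : Fin k → Fin N),
    StrictMono t ∧
    (∀ j, c (t j) = v) ∧
    (∀ j : Fin k, c' (t j) = k * (v - 1) + (j : ℕ) + 2) ∧
    (∀ i : Fin N, (∀ j, i ≠ t j) → c' i = c i)

/-- Reachable from the initial configuration of `k^ℓ` chips all on the root. -/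
def Reachable (k ℓ : ℕ) (c : Fin (k ^ ℓ) → ℕ) : Prop :=
  Relation.ReflTransGen (FireStep k (k ^ ℓ)) (fun _ => 1) c

/-- A configuration is stable if every vertex holds fewer than `k` chips. -/
def Stable (k N : ℕ) (c : Fin N → ℕ) : Prop :=
  ∀ v : ℕ, (Finset.univ.filter (fun i => c i = v)).card < k

/-- `A_{k,m}` : ballot sequences of length `k*m` with values in `Fin k` (value `j`
representing `j+1 ∈ {1,…,k}`): each value occurs exactly `m` times, and in every prefix
the number of occurrences of `j` is at least the number of occurrences of `j+1`. -/
def CatalanSet (k m : ℕ) : Set (Fin (k * m) → Fin k) :=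
  {a | (∀ v : Fin k, (Finset.univ.filter (fun i => a i = v)).card = m) ∧
    ∀ (p j : ℕ), j + 1 < k →
      (Finset.univ.filter (fun i : Fin (k * m) => (i : ℕ) < p ∧ (a i : ℕ) = j + 1)).card ≤
      (Finset.univ.filter (fun i : Fin (k * m) => (i : ℕ) < p ∧ (a i : ℕ) = j)).card}

open Finset


/-- The vertex reached from the root by following a word of child-indices. -/
def toV (k : ℕ) (p : List (Fin k)) : ℕ :=
  p.foldl (fun v j => k * (v - 1) + (j : ℕ) + 2) 1

@[simp] lemma toV_nil (k : ℕ) : toV k [] = 1 := rfl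

lemma toV_concat (k : ℕ) (p : List (Fin k)) (j : Fin k) :
    toV k (p ++ [j]) = k * (toV k p - 1) + (j : ℕ) + 2 := by
  simp [toV, List.foldl_append]

lemma one_le_toV (k : ℕ) (p : List (Fin k)) : 1 ≤ toV k p := by
  induction p using List.reverseRecOn with
  | nil => simp
  | append_singleton p j ih => rw [toV_concat]; omega

lemma toV_concat_ne_one (k : ℕ) (p : List (Fin k)) (j : Fin k) :
    toV k (p ++ [j]) ≠ 1 := by
  rw [toV_concat]; omega

lemma toV_injective (k : ℕ) : Function.Injective (toV k) := by
  intro a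
  induction a using List.reverseRecOn with
  | nil =>
    intro b hb
    induction b using List.reverseRecOn with
    | nil => rfl
    | append_singleton q j' ih => exact absurd hb.symm (toV_concat_ne_one k q j')
  | append_singleton p j ih =>
    intro b hb
    induction b using List.reverseRecOn with
    | nil => exact absurd hb (toV_concat_ne_one k p j)
    | append_singleton q j' ih2 =>
      rw [toV_concat, toV_concat] at hb
      have hk : 0 < k := j.pos
      have h1 : k * (toV k p - 1) + (j : ℕ) = k * (toV k q - 1) + (j' : ℕ) := by omega
      have hj : (j : ℕ) = (j' : ℕ) := by
        have e1 := Nat.mul_add_mod k (toV k p - 1) (j : ℕ)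
        have e2 := Nat.mul_add_mod k (toV k q - 1) (j' : ℕ)
        have hjk : (j : ℕ) % k = (j : ℕ) := Nat.mod_eq_of_lt j.isLt
        have hj'k : (j' : ℕ) % k = (j' : ℕ) := Nat.mod_eq_of_lt j'.isLt
        rw [h1] at e1
        omega
      have hq : toV k p = toV k q := by
        have h2 : k * (toV k p - 1) = k * (toV k q - 1) := by omega
        have h3 : toV k p - 1 = toV k q - 1 := Nat.eq_of_mul_eq_mul_left hk h2
        have := one_le_toV k p; have := one_le_toV k q; omega
      rw [ih hq, Fin.ext_iff.mpr hj]



/-- word-level firing step -/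
def WStep (k N : ℕ) (d d' : Fin N → List (Fin k)) : Prop :=
  ∃ (p : List (Fin k)) (t : Fin k → Fin N),
    StrictMono t ∧
    (∀ j, d (t j) = p) ∧
    (∀ j : Fin k, d' (t j) = p ++ [j]) ∧
    (∀ i : Fin N, (∀ j, i ≠ t j) → d' i = d i)

lemma WStep.fire {k N : ℕ} {d d' : Fin N → List (Fin k)} (h : WStep k N d d') :
    FireStep k N (toV k ∘ d) (toV k ∘ d') := by
  obtain ⟨p, t, ht, hp, hp', hrest⟩ := h
  refine ⟨toV k p, t, ht, fun j => by simp [hp j], fun j => ?_, fun i hi => by simp [hrest i hi]⟩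
  simp [hp' j, toV_concat]

lemma wpath_fire {k N : ℕ} {d d' : Fin N → List (Fin k)}
    (h : Relation.ReflTransGen (WStep k N) d d') :
    Relation.ReflTransGen (FireStep k N) (toV k ∘ d) (toV k ∘ d') := by
  induction h with
  | refl => exact Relation.ReflTransGen.refl
  | tail _ hstep ih => exact ih.tail hstep.fire

/-- Lifting a word-path on a sub-collection of chips into the big system,
grafted under the base word `p₀`, with chips outside the range of `e` frozen at `g`. -/
noncomputable def liftCfg {k M N : ℕ} (e : Fin M → Fin N) (p₀ : List (Fin k))
    (g : Fin N → List (Fin k)) (d : Fin M → List (Fin k)) : Fin N → List (Fin k) :=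
  fun i => if h : ∃ x, e x = i then p₀ ++ d h.choose else g i

lemma liftCfg_apply {k M N : ℕ} {e : Fin M → Fin N} (he : Function.Injective e)
    (p₀ : List (Fin k)) (g : Fin N → List (Fin k)) (d : Fin M → List (Fin k)) (x : Fin M) :
    liftCfg e p₀ g d (e x) = p₀ ++ d x := by
  have h : ∃ y, e y = e x := ⟨x, rfl⟩
  have : h.choose = x := he h.choose_spec
  simp [liftCfg, dif_pos h, this]

lemma liftCfg_apply_not {k M N : ℕ} {e : Fin M → Fin N} (p₀ : List (Fin k))
    (g : Fin N → List (Fin k)) (d : Fin M → List (Fin k)) {i : Fin N} (hi : ∀ x, e x ≠ i) :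
    liftCfg e p₀ g d i = g i := by
  have h : ¬ ∃ x, e x = i := by rintro ⟨x, rfl⟩; exact hi x rfl
  simp [liftCfg, dif_neg h]

lemma WStep.lift {k M N : ℕ} {e : Fin M → Fin N} (he : StrictMono e)
    (p₀ : List (Fin k)) (g : Fin N → List (Fin k)) {d d' : Fin M → List (Fin k)}
    (h : WStep k M d d') : WStep k N (liftCfg e p₀ g d) (liftCfg e p₀ g d') := by
  obtain ⟨p, t, ht, hp, hp', hrest⟩ := h
  refine ⟨p₀ ++ p, e ∘ t, he.comp ht, fun j => ?_, fun j => ?_, fun i hi => ?_⟩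
  · show liftCfg e p₀ g d (e (t j)) = p₀ ++ p
    rw [liftCfg_apply he.injective, hp j]
  · show liftCfg e p₀ g d' (e (t j)) = (p₀ ++ p) ++ [j]
    rw [liftCfg_apply he.injective, hp' j, List.append_assoc]
  · by_cases hx : ∃ x, e x = i
    · obtain ⟨x, rfl⟩ := hx
      rw [liftCfg_apply he.injective, liftCfg_apply he.injective,
        hrest x (fun j hj => hi j (by rw [hj]; rfl))]
    · push_neg at hx
      rw [liftCfg_apply_not _ _ _ hx, liftCfg_apply_not _ _ _ hx]

lemma wpath_lift {k M N : ℕ} {e : Fin M → Fin N} (he : StrictMono e)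
    (p₀ : List (Fin k)) (g : Fin N → List (Fin k)) {d d' : Fin M → List (Fin k)}
    (h : Relation.ReflTransGen (WStep k M) d d') :
    Relation.ReflTransGen (WStep k N) (liftCfg e p₀ g d) (liftCfg e p₀ g d') := by
  induction h with
  | refl => exact Relation.ReflTransGen.refl
  | tail _ hstep ih => exact ih.tail (hstep.lift he p₀ g)

section OrderIsoCount

variable {N m : ℕ} {F : Finset (Fin N)} (hF : F.card = m)

/-- transporting a count along `orderIsoOfFin` for predicates supported inside `F`. -/
lemma card_filter_orderIso (Q : Fin N → Prop) [DecidablePred Q] (hQ : ∀ i, Q i → i ∈ F) :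
    (univ.filter (fun x : Fin m => Q ((F.orderIsoOfFin hF x : Fin N)))).card =
      (univ.filter Q).card := by
  set e := F.orderIsoOfFin hF
  apply Finset.card_bij (fun x _ => (e x : Fin N))
  · intro x hx
    simp only [mem_filter, mem_univ, true_and] at hx ⊢
    exact hx
  · intro x _ y _ hxy
    exact e.injective (Subtype.ext hxy)
  · intro i hi
    simp only [mem_filter, mem_univ, true_and] at hi
    exact ⟨e.symm ⟨i, hQ i hi⟩, by simpa using hi, by simp⟩

/-- the fundamental threshold correspondence for `orderIsoOfFin`. -/
lemma orderIso_lt_iff (t : ℕ) (x : Fin m) :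
    (x : ℕ) < (F.filter (fun i : Fin N => (i : ℕ) < t)).card ↔
      ((F.orderIsoOfFin hF x : Fin N) : ℕ) < t := by
  set e := F.orderIsoOfFin hF with he
  set L := F.filter (fun i : Fin N => (i : ℕ) < t) with hL
  constructor
  · intro hx
    by_contra hcon
    push_neg at hcon
    have hsub : L ⊆ (Finset.Iio x).image (fun y => (e y : Fin N)) := by
      intro i hi
      rw [hL, mem_filter] at hi
      have hy : e (e.symm ⟨i, hi.1⟩) = ⟨i, hi.1⟩ := e.apply_symm_apply _
      refine Finset.mem_image.mpr ⟨e.symm ⟨i, hi.1⟩, ?_, by rw [hy]⟩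
      rw [Finset.mem_Iio]
      by_contra hxy
      push_neg at hxy
      have h1 : e x ≤ e (e.symm ⟨i, hi.1⟩) := e.monotone hxy
      rw [hy] at h1
      have h2 : ((e x : Fin N) : ℕ) ≤ (i : ℕ) := h1
      omega
    have h3 := (Finset.card_le_card hsub).trans (Finset.card_image_le)
    rw [Fin.card_Iio] at h3
    omega
  · intro hx
    have hsub : (Finset.Iic x).image (fun y => (e y : Fin N)) ⊆ L := by
      intro i hi
      obtain ⟨y, hy, rfl⟩ := Finset.mem_image.mp hi
      rw [Finset.mem_Iic] at hy
      have h1 : (e y : Fin N) ≤ (e x : Fin N) := e.monotone hy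
      rw [hL, mem_filter]
      have h2 : ((e y : Fin N) : ℕ) ≤ ((e x : Fin N) : ℕ) := h1
      exact ⟨(e y).2, by omega⟩
    have h2 : ((Finset.Iic x).image (fun y => (e y : Fin N))).card = (x : ℕ) + 1 := by
      rw [Finset.card_image_of_injective _ (fun a b hab => e.injective (Subtype.ext hab))]
      rw [Fin.card_Iic]
    have := Finset.card_le_card hsub
    omega

/-- small-to-big threshold: for each small threshold there is a big one matching it. -/
lemma small_to_big_threshold (t' : ℕ) :
    ∃ t : ℕ, ∀ x : Fin m, ((x : ℕ) < t' ↔ ((F.orderIsoOfFin hF x : Fin N) : ℕ) < t) := by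
  set e := F.orderIsoOfFin hF with he
  by_cases h : t' < m
  · refine ⟨((e ⟨t', h⟩ : Fin N) : ℕ), fun x => ?_⟩
    constructor
    · intro hx
      have h1 : e x < e ⟨t', h⟩ := e.strictMono (show x < (⟨t', h⟩ : Fin m) from hx)
      exact h1
    · intro hx
      have h1 : e x < e ⟨t', h⟩ := Subtype.coe_lt_coe.mp (Fin.lt_def.mpr hx)
      exact e.lt_iff_lt.mp h1
  · refine ⟨N, fun x => ?_⟩
    push_neg at h
    have hx : (x : ℕ) < m := x.isLt
    have h2 : ((e x : Fin N) : ℕ) < N := (e x : Fin N).isLt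
    constructor <;> intro <;> omega

/-- transporting a thresholded count along the order iso, given a matching threshold pair. -/
lemma card_filter_orderIso_threshold (Q : Fin N → Prop) [DecidablePred Q]
    (hQ : ∀ i, Q i → i ∈ F) {t t' : ℕ}
    (hcorr : ∀ x : Fin m, ((x : ℕ) < t' ↔ ((F.orderIsoOfFin hF x : Fin N) : ℕ) < t)) :
    (univ.filter (fun x : Fin m => (x : ℕ) < t' ∧ Q ((F.orderIsoOfFin hF x : Fin N)))).card =
      (univ.filter (fun i : Fin N => (i : ℕ) < t ∧ Q i)).card := by
  rw [← card_filter_orderIso hF (fun i => (i : ℕ) < t ∧ Q i) (fun i hi => hQ i hi.2)]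
  congr 1
  apply Finset.filter_congr
  intro x _
  rw [hcorr x]

end OrderIsoCount

lemma strictMono_fin_of_succ {k : ℕ} {α : Type*} [Preorder α] (f : Fin k → α)
    (h : ∀ (j : ℕ) (hj : j + 1 < k), f ⟨j, by omega⟩ < f ⟨j + 1, hj⟩) : StrictMono f := by
  have key : ∀ (b a : ℕ) (ha : a < k) (hb : b < k), a < b → f ⟨a, ha⟩ < f ⟨b, hb⟩ := by
    intro b
    induction b with
    | zero => omega
    | succ c ih =>
      intro a ha hb hab
      rcases Nat.lt_succ_iff_lt_or_eq.mp hab with h1 | h1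
      · exact lt_trans (ih a ha (by omega) h1) (h c hb)
      · subst h1; exact h a hb
  intro a b hab
  have := key (b : ℕ) (a : ℕ) a.isLt b.isLt hab
  simpa using this

section Realize

variable {k N m : ℕ} (w : Fin N → Fin k)
  (hcount : ∀ j : Fin k, (univ.filter (fun i => w i = j)).card = m)

/-- the order isomorphism enumerating the fiber of `w` over `j`. -/
noncomputable def fibIso (j : Fin k) : Fin m ≃o {x // x ∈ univ.filter (fun i => w i = j)} :=
  (univ.filter (fun i => w i = j)).orderIsoOfFin (hcount j)

lemma fibIso_w (j : Fin k) (x : Fin m) : w ((fibIso w hcount j x : Fin N)) = j :=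
  (Finset.mem_filter.mp (fibIso w hcount j x).2).2

lemma fib_filter_eq (j : Fin k) (t : ℕ) :
    (univ.filter (fun i => w i = j)).filter (fun i : Fin N => (i : ℕ) < t) =
      univ.filter (fun i : Fin N => (i : ℕ) < t ∧ (w i : ℕ) = (j : ℕ)) := by
  ext i
  simp only [mem_filter, mem_univ, true_and]
  constructor
  · rintro ⟨h1, h2⟩; exact ⟨h2, by rw [h1]⟩
  · rintro ⟨h1, h2⟩; exact ⟨Fin.ext h2, h1⟩

/-- the dominance (ballot) condition on a word. -/
def Dom {k N : ℕ} (w : Fin N → Fin k) : Prop := ∀ (t j : ℕ), j + 1 < k →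
    (univ.filter (fun i : Fin N => (i : ℕ) < t ∧ (w i : ℕ) = j + 1)).card ≤
    (univ.filter (fun i : Fin N => (i : ℕ) < t ∧ (w i : ℕ) = j)).card

lemma fibIso_lt (hdom : Dom w) (x : Fin m) (j : ℕ) (hj : j + 1 < k) :
    ((fibIso w hcount ⟨j, by omega⟩ x : Fin N) : ℕ) <
      ((fibIso w hcount ⟨j + 1, hj⟩ x : Fin N) : ℕ) := by
  set j0 : Fin k := ⟨j, by omega⟩
  set j1 : Fin k := ⟨j + 1, hj⟩
  set t : ℕ := ((fibIso w hcount j1 x : Fin N) : ℕ) + 1 with ht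
  have h1 : (x : ℕ) <
      ((univ.filter (fun i => w i = j1)).filter (fun i : Fin N => (i : ℕ) < t)).card :=
    (orderIso_lt_iff (hcount j1) t x).mpr (Nat.lt_succ_self _)
  rw [fib_filter_eq] at h1
  have h2 : (x : ℕ) <
      (univ.filter (fun i : Fin N => (i : ℕ) < t ∧ (w i : ℕ) = (j0 : ℕ))).card :=
    lt_of_lt_of_le h1 (hdom t j hj)
  rw [← fib_filter_eq] at h2
  have h3 : ((fibIso w hcount j0 x : Fin N) : ℕ) < t := (orderIso_lt_iff (hcount j0) t x).mp h2
  have hne : ((fibIso w hcount j0 x : Fin N) : ℕ) ≠ ((fibIso w hcount j1 x : Fin N) : ℕ) := by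
    intro hc
    have e1 := fibIso_w w hcount j0 x
    have e2 := fibIso_w w hcount j1 x
    rw [Fin.ext hc, e2] at e1
    have : (j1 : ℕ) = (j0 : ℕ) := by rw [e1]
    simp [j0, j1] at this
  omega

/-- the condition that chip `i` belongs to one of the first `x` blocks. -/
def blockCond (x : ℕ) (i : Fin N) : Prop :=
  ∃ y : Fin m, (y : ℕ) < x ∧ ∃ j : Fin k, i = (fibIso w hcount j y : Fin N)

/-- intermediate configurations: after having fired the first `x` blocks. -/
noncomputable def blockCfg (x : ℕ) : Fin N → List (Fin k) :=
  fun i => @ite _ (blockCond w hcount x i) (Classical.dec _) [w i] []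

lemma blockCond_irr : ∀ {x i}, blockCond w hcount x i → blockCond w hcount (x+1) i := by
  rintro x i ⟨y, hy, j, rfl⟩; exact ⟨y, by omega, j, rfl⟩

lemma blockCfg_zero : blockCfg w hcount 0 = fun _ => [] := by
  funext i
  have : ¬ blockCond w hcount 0 i := by rintro ⟨y, hy, -⟩; omega
  simp [blockCfg, if_neg this]

lemma blockCfg_last : blockCfg w hcount m = fun i => [w i] := by
  funext i
  have hmem : i ∈ univ.filter (fun i' => w i' = w i) := by simp
  have hc : blockCond w hcount m i := by
    refine ⟨(fibIso w hcount (w i)).symm ⟨i, hmem⟩, Fin.isLt _, w i, ?_⟩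
    simp
  simp only [blockCfg, if_pos hc]

lemma blockCfg_step (hdom : Dom w) (x : ℕ) (hx : x < m) :
    WStep k N (blockCfg w hcount x) (blockCfg w hcount (x + 1)) := by
  refine ⟨[], fun j => (fibIso w hcount j ⟨x, hx⟩ : Fin N), ?_, ?_, ?_, ?_⟩
  · apply strictMono_fin_of_succ
    intro j hj
    exact fibIso_lt w hcount hdom ⟨x, hx⟩ j hj
  · intro j
    have hc : ¬ blockCond w hcount x (fibIso w hcount j ⟨x, hx⟩ : Fin N) := by
      rintro ⟨y, hy, j', hee⟩
      have e1 : j = j' := by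
        have a1 := fibIso_w w hcount j ⟨x, hx⟩
        have a2 := fibIso_w w hcount j' y
        rw [hee, a2] at a1; exact a1.symm
      subst e1
      have : (⟨x, hx⟩ : Fin m) = y := (fibIso w hcount j).injective (Subtype.ext hee)
      rw [← this] at hy
      exact absurd hy (by simp)
    simp only [blockCfg, if_neg hc]
  · intro j
    have hc : blockCond w hcount (x+1) (fibIso w hcount j ⟨x, hx⟩ : Fin N) :=
      ⟨⟨x, hx⟩, by simp, j, rfl⟩
    simp only [blockCfg, if_pos hc, fibIso_w w hcount j ⟨x, hx⟩, List.nil_append]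
  · intro i hi
    have hiff : blockCond w hcount (x+1) i ↔ blockCond w hcount x i := by
      constructor
      · rintro ⟨y, hy, j', rfl⟩
        rcases Nat.lt_succ_iff_lt_or_eq.mp hy with h1 | h1
        · exact ⟨y, h1, j', rfl⟩
        · exfalso
          have : y = (⟨x, hx⟩ : Fin m) := Fin.ext h1
          subst this
          exact hi j' rfl
      · rintro ⟨y, hy, j', rfl⟩; exact ⟨y, by omega, j', rfl⟩
    simp only [blockCfg]
    by_cases hb : blockCond w hcount x i
    · rw [if_pos (hiff.mpr hb), if_pos hb]
    · rw [if_neg (fun hc => hb (hiff.mp hc)), if_neg hb]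

/-- root realization: a ballot word is realizable by a sequence of firings at a vertex. -/
lemma realize_word (hcount : ∀ j : Fin k, (univ.filter (fun i => w i = j)).card = m)
    (hdom : Dom w) :
    Relation.ReflTransGen (WStep k N) (fun _ => []) (fun i => [w i]) := by
  have key : ∀ x ≤ m, Relation.ReflTransGen (WStep k N) (fun _ => []) (blockCfg w hcount x) := by
    intro x
    induction x with
    | zero => intro _; rw [blockCfg_zero]
    | succ King ih =>
      intro hx
      exact (ih (by omega)).tail (blockCfg_step w hcount hdom King (by omega))
  have := key m le_rfl
  rwa [blockCfg_last] at this

end Realize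

/-! ### Admissible digit arrays -/

/-- chip `i`'s word extends node `p` with digit `j`. -/
def ChExt {k N : ℕ} (d : Fin N → List (Fin k)) (p : List (Fin k)) (j : Fin k) (i : Fin N) : Prop :=
  p ++ [j] <+: d i

instance {k N : ℕ} (d : Fin N → List (Fin k)) (p : List (Fin k)) (j : Fin k) (i : Fin N) :
    Decidable (ChExt d p j i) := decidable_of_iff (p ++ [j] <+: d i) Iff.rfl

/-- numeric version. -/
def ChExtN {k N : ℕ} (d : Fin N → List (Fin k)) (p : List (Fin k)) (n : ℕ) (i : Fin N) : Prop :=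
  ∃ j : Fin k, (j : ℕ) = n ∧ p ++ [j] <+: d i

instance {k N : ℕ} (d : Fin N → List (Fin k)) (p : List (Fin k)) (n : ℕ) (i : Fin N) :
    Decidable (ChExtN d p n i) :=
  decidable_of_iff (∃ j : Fin k, (j : ℕ) = n ∧ p ++ [j] <+: d i) Iff.rfl

/-- admissible digit arrays: at every node, all `k` child counts are the full subtree
sizes, and the ballot (dominance) condition holds. -/
def Adm (k ℓ N : ℕ) (d : Fin N → List (Fin k)) : Prop :=
  (∀ i, (d i).length = ℓ) ∧
  ∀ p : List (Fin k), p.length < ℓ →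
    ((∀ j : Fin k, (univ.filter (fun i : Fin N => ChExt d p j i)).card = k ^ (ℓ - p.length - 1)) ∧
     (∀ (t n : ℕ), n + 1 < k →
       (univ.filter (fun i : Fin N => (i : ℕ) < t ∧ ChExtN d p (n + 1) i)).card ≤
       (univ.filter (fun i : Fin N => (i : ℕ) < t ∧ ChExtN d p n i)).card))

section Split

variable {k ℓ N : ℕ} {d : Fin N → List (Fin k)} (hlen : ∀ i, (d i).length = ℓ + 1)

include hlen

lemma d_ne_nil (i : Fin N) : d i ≠ [] := by
  intro h; have h2 := hlen i; rw [h] at h2; simp only [List.length_nil] at h2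
  exact (Nat.succ_ne_zero ℓ) h2.symm

/-- the first digit of each chip's word. -/
noncomputable def headw : Fin N → Fin k := fun i => (d i).head (d_ne_nil hlen i)

lemma headw_cons (i : Fin N) : d i = headw hlen i :: (d i).tail := by
  simp [headw]

lemma ext_nil_iff (j : Fin k) (i : Fin N) : ChExt d [] j i ↔ headw hlen i = j := by
  unfold ChExt
  rw [List.nil_append]
  constructor
  · intro h
    rcases h with ⟨s, hs⟩
    have hdi : d i = j :: s := by simpa using hs.symm
    simp [headw, hdi]
  · intro h
    rw [headw_cons hlen i, ← h]
    exact ⟨(d i).tail, rfl⟩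

lemma extN_nil_iff (n : ℕ) (i : Fin N) : ChExtN d [] n i ↔ (headw hlen i : ℕ) = n := by
  constructor
  · rintro ⟨j, rfl, hpre⟩
    rw [show ([j] : List (Fin k)) = [] ++ [j] from rfl] at hpre
    have := (ext_nil_iff hlen j i).mp hpre
    rw [this]
  · intro h
    exact ⟨headw hlen i, h, (ext_nil_iff hlen (headw hlen i) i).mpr rfl⟩

lemma chext_cons_iff (j : Fin k) (q : List (Fin k)) (j' : Fin k) (i : Fin N) :
    ChExt d (j :: q) j' i ↔ headw hlen i = j ∧ (q ++ [j'] <+: (d i).tail) := by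
  unfold ChExt
  constructor
  · intro h
    rw [headw_cons hlen i] at h
    have h2 : j :: (q ++ [j']) <+: headw hlen i :: (d i).tail := h
    rw [List.cons_prefix_cons] at h2
    exact ⟨h2.1.symm, h2.2⟩
  · rintro ⟨h1, h2⟩
    rw [headw_cons hlen i]
    show j :: (q ++ [j']) <+: headw hlen i :: (d i).tail
    rw [List.cons_prefix_cons]
    exact ⟨h1.symm, h2⟩

lemma chextN_cons_iff (j : Fin k) (q : List (Fin k)) (n : ℕ) (i : Fin N) :
    ChExtN d (j :: q) n i ↔ headw hlen i = j ∧ ChExtN (fun i' => (d i').tail) q n i := by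
  constructor
  · rintro ⟨j', hj', hpre⟩
    have := (chext_cons_iff hlen j q j' i).mp hpre
    exact ⟨this.1, j', hj', this.2⟩
  · rintro ⟨h1, j', hj', hpre⟩
    exact ⟨j', hj', (chext_cons_iff hlen j q j' i).mpr ⟨h1, hpre⟩⟩

variable (hAdm : Adm k (ℓ + 1) N d)

include hAdm

lemma fiber_card (j : Fin k) :
    (univ.filter (fun i => headw hlen i = j)).card = k ^ ℓ := by
  have h := (hAdm.2 [] (by simp)).1 j
  simp only [List.length_nil, Nat.sub_zero, Nat.add_sub_cancel] at h
  rw [← h]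
  apply Finset.card_nbij id (fun i hi => by
      simp only [Finset.mem_coe, mem_filter, mem_univ, true_and] at hi ⊢
      exact (ext_nil_iff hlen j i).mpr hi)
  · intro i hi i' hi' h; exact h
  · intro i hi
    simp only [Set.mem_image]
    simp only [coe_filter, Set.mem_setOf_eq, mem_univ, true_and] at hi ⊢
    exact ⟨i, (ext_nil_iff hlen j i).mp hi, rfl⟩

lemma dom_headw : Dom (headw hlen) := by
  intro t n hn
  have h := (hAdm.2 [] (by simp)).2 t n hn
  have e1 : ∀ (nn : ℕ), univ.filter (fun i : Fin N => (i : ℕ) < t ∧ ChExtN d [] nn i) =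
      univ.filter (fun i : Fin N => (i : ℕ) < t ∧ (headw hlen i : ℕ) = nn) := by
    intro nn
    apply Finset.filter_congr
    intro i _
    rw [extN_nil_iff hlen]
  rw [e1, e1] at h
  exact h

/-- the small array in the `j`-th subtree is admissible. -/
lemma adm_small (j : Fin k) (hc : (univ.filter (fun i => headw hlen i = j)).card = k ^ ℓ) :
    Adm k ℓ (k ^ ℓ)
      (fun x => (d (((univ.filter (fun i => headw hlen i = j)).orderIsoOfFin hc x : Fin N))).tail) := by
  set e := (univ.filter (fun i => headw hlen i = j)).orderIsoOfFin hc with he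
  constructor
  · intro x
    have := hlen ((e x : Fin N))
    simp [List.length_tail, this]
  · intro q hq
    have hwe : ∀ x : Fin (k ^ ℓ), headw hlen ((e x : Fin N)) = j := by
      intro x
      exact (mem_filter.mp (e x).2).2
    constructor
    · intro j'
      have hiff : ∀ x : Fin (k ^ ℓ),
          (ChExt (fun x' => (d ((e x' : Fin N))).tail) q j' x) ↔ ChExt d (j :: q) j' ((e x : Fin N)) := by
        intro x
        rw [chext_cons_iff hlen]
        simp only [hwe x, true_and]
        exact Iff.rfl
      have hsub : ∀ i, ChExt d (j :: q) j' i → i ∈ univ.filter (fun i' => headw hlen i' = j) := by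
        intro i hi
        rw [mem_filter]
        exact ⟨mem_univ i, ((chext_cons_iff hlen j q j' i).mp hi).1⟩
      have := card_filter_orderIso hc (ChExt d (j :: q) j') hsub
      rw [filter_congr (fun x _ => hiff x), this]
      have hcnt := (hAdm.2 (j :: q) (by simpa using by omega : (j :: q).length < ℓ + 1)).1 j'
      rw [hcnt]
      congr 1
      simp only [List.length_cons]
      omega
    · intro t' n hn
      obtain ⟨t, hcorr⟩ := small_to_big_threshold hc t'
      have hiff : ∀ (nn : ℕ) (x : Fin (k ^ ℓ)),
          ((x : ℕ) < t' ∧ ChExtN (fun x' => (d ((e x' : Fin N))).tail) q nn x) ↔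
            ((x : ℕ) < t' ∧ ChExtN d (j :: q) nn ((e x : Fin N))) := by
        intro nn x
        rw [chextN_cons_iff hlen]
        simp only [hwe x, true_and]
        exact and_congr_right fun _ => Iff.rfl
      have hsub : ∀ (nn : ℕ) i, ChExtN d (j :: q) nn i → i ∈ univ.filter (fun i' => headw hlen i' = j) := by
        intro nn i hi
        rw [mem_filter]
        exact ⟨mem_univ i, ((chextN_cons_iff hlen j q nn i).mp hi).1⟩
      have htrans : ∀ nn : ℕ,
          (univ.filter (fun x : Fin (k ^ ℓ) =>
            (x : ℕ) < t' ∧ ChExtN (fun x' => (d ((e x' : Fin N))).tail) q nn x)).card =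
          (univ.filter (fun i : Fin N => (i : ℕ) < t ∧ ChExtN d (j :: q) nn i)).card := by
        intro nn
        rw [filter_congr (fun x _ => hiff nn x)]
        exact card_filter_orderIso_threshold hc (ChExtN d (j :: q) nn) (hsub nn) hcorr
      rw [htrans, htrans]
      have := (hAdm.2 (j :: q) (by simp; omega)).2 t n hn
      exact this

end Split

/-! ### Realization of admissible arrays -/

section Realization

variable {k : ℕ}

lemma adm_zero_eq {N : ℕ} {d : Fin N → List (Fin k)} (h : Adm k 0 N d) :
    d = fun _ => [] := by
  funext i
  exact List.length_eq_zero_iff.mp (h.1 i)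

lemma realize_adm : ∀ (ℓ : ℕ) (d : Fin (k ^ ℓ) → List (Fin k)),
    Adm k ℓ (k ^ ℓ) d → Relation.ReflTransGen (WStep k (k ^ ℓ)) (fun _ => []) d := by
  intro ℓ
  induction ℓ with
  | zero =>
    intro d h
    rw [adm_zero_eq h]
  | succ ℓ ih =>
    intro d hAdm
    have hlen : ∀ i, (d i).length = ℓ + 1 := hAdm.1
    have hcount : ∀ j : Fin k,
        (univ.filter (fun i => headw hlen i = j)).card = k ^ ℓ :=
      fun j => fiber_card hlen hAdm j
    have hdom : Dom (headw hlen) := dom_headw hlen hAdm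
    have part1 : Relation.ReflTransGen (WStep k (k ^ (ℓ + 1)))
        (fun _ => []) (fun i => [headw hlen i]) := realize_word (headw hlen) hcount hdom
    have phase : ∀ a : ℕ, a ≤ k → Relation.ReflTransGen (WStep k (k ^ (ℓ + 1)))
        (fun i => [headw hlen i])
        (fun i => if ((headw hlen i : ℕ)) < a then d i else [headw hlen i]) := by
      intro a
      induction a with
      | zero =>
        intro _
        have hR : (fun i => if ((headw hlen i : ℕ)) < 0 then d i else [headw hlen i]) =
            (fun i : Fin (k ^ (ℓ + 1)) => [headw hlen i]) := by
          funext i; simp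
        rw [hR]
      | succ a ihA =>
        intro ha
        refine (ihA (by omega)).trans ?_
        have hak : a < k := ha
        have hj : ∀ x : Fin (k ^ ℓ),
            headw hlen (((univ.filter (fun i => headw hlen i = ⟨a, hak⟩)).orderIsoOfFin
              (hcount ⟨a, hak⟩) x : Fin (k ^ (ℓ + 1)))) = ⟨a, hak⟩ :=
          fun x => (mem_filter.mp ((univ.filter (fun i => headw hlen i = ⟨a, hak⟩)).orderIsoOfFin
            (hcount ⟨a, hak⟩) x).2).2
        set e : Fin (k ^ ℓ) → Fin (k ^ (ℓ + 1)) :=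
          fun x => ((univ.filter (fun i => headw hlen i = ⟨a, hak⟩)).orderIsoOfFin
            (hcount ⟨a, hak⟩) x : Fin (k ^ (ℓ + 1))) with hedef
        have hemb : StrictMono e := by
          intro x y hxy
          exact ((univ.filter (fun i => headw hlen i = ⟨a, hak⟩)).orderIsoOfFin
            (hcount ⟨a, hak⟩)).strictMono hxy
        have hrange : ∀ i : Fin (k ^ (ℓ + 1)), headw hlen i = ⟨a, hak⟩ → ∃ x, e x = i := by
          intro i hi
          refine ⟨((univ.filter (fun i' => headw hlen i' = ⟨a, hak⟩)).orderIsoOfFin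
            (hcount ⟨a, hak⟩)).symm ⟨i, by simp [hi]⟩, ?_⟩
          show ((((univ.filter (fun i' => headw hlen i' = ⟨a, hak⟩)).orderIsoOfFin
            (hcount ⟨a, hak⟩)) (((univ.filter (fun i' => headw hlen i' = ⟨a, hak⟩)).orderIsoOfFin
            (hcount ⟨a, hak⟩)).symm ⟨i, by simp [hi]⟩) : Fin (k ^ (ℓ + 1)))) = i
          rw [OrderIso.apply_symm_apply]
        have hsmall := adm_small hlen hAdm ⟨a, hak⟩ (hcount ⟨a, hak⟩)
        have hpath := ih _ hsmall
        set g : Fin (k ^ (ℓ + 1)) → List (Fin k) :=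
          fun i => if ((headw hlen i : ℕ)) < a then d i else [headw hlen i] with hgdef
        have hlift := wpath_lift hemb [⟨a, hak⟩] g hpath
        have E1 : liftCfg e [⟨a, hak⟩] g (fun _ => []) = g := by
          funext i
          by_cases hx : ∃ x, e x = i
          · obtain ⟨x, rfl⟩ := hx
            rw [liftCfg_apply hemb.injective]
            have hwi : headw hlen (e x) = ⟨a, hak⟩ := hj x
            simp only [hgdef, hwi]
            simp
          · push_neg at hx
            rw [liftCfg_apply_not _ _ _ hx]
        have E2 : liftCfg e [⟨a, hak⟩] g
            (fun x => (d (((univ.filter (fun i => headw hlen i = ⟨a, hak⟩)).orderIsoOfFin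
              (hcount ⟨a, hak⟩) x : Fin (k ^ (ℓ + 1))))).tail) =
            (fun i => if ((headw hlen i : ℕ)) < a + 1 then d i else [headw hlen i]) := by
          funext i
          by_cases hx : ∃ x, e x = i
          · obtain ⟨x, rfl⟩ := hx
            rw [liftCfg_apply hemb.injective]
            have hwi : headw hlen (e x) = ⟨a, hak⟩ := hj x
            have hcons := headw_cons hlen (e x)
            simp only [hwi] at hcons
            rw [show ((⟨a, hak⟩ : Fin k) :: (d (e x)).tail : List (Fin k)) =
              [(⟨a, hak⟩ : Fin k)] ++ (d (e x)).tail from rfl] at hcons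
            rw [hedef] at hcons ⊢
            rw [← hcons]
            have : ((headw hlen ((((univ.filter (fun i' => headw hlen i' = ⟨a, hak⟩)).orderIsoOfFin
              (hcount ⟨a, hak⟩)) x : Fin (k ^ (ℓ + 1)))) : ℕ)) < a + 1 := by
              rw [hj x]; simp
            rw [if_pos this]
          · push_neg at hx
            rw [liftCfg_apply_not _ _ _ hx]
            have hne : headw hlen i ≠ ⟨a, hak⟩ := fun hc => by
              obtain ⟨x, hx'⟩ := hrange i hc
              exact hx x hx'
            have hnea : ((headw hlen i : ℕ)) ≠ a := fun hc => hne (Fin.ext hc)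
            simp only [hgdef]
            by_cases hlt : ((headw hlen i : ℕ)) < a
            · rw [if_pos hlt, if_pos (by omega)]
            · rw [if_neg hlt, if_neg (by omega)]
        rw [E1, E2] at hlift
        exact hlift
    have hfin := (part1.trans (phase k le_rfl))
    have : (fun i => if ((headw hlen i : ℕ)) < k then d i else [headw hlen i]) = d := by
      funext i
      rw [if_pos (headw hlen i).isLt]
    rwa [this] at hfin

/-- admissible arrays yield reachable configurations. -/
lemma adm_reachable {ℓ : ℕ} (d : Fin (k ^ ℓ) → List (Fin k)) (h : Adm k ℓ (k ^ ℓ) d) :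
    Relation.ReflTransGen (FireStep k (k ^ ℓ)) (fun _ => 1) (toV k ∘ d) := by
  have := wpath_fire (realize_adm ℓ d h)
  have h0 : toV k ∘ (fun _ : Fin (k ^ ℓ) => ([] : List (Fin k))) = fun _ => 1 := rfl
  rwa [h0] at this

end Realization

/-! ### The block invariant along firing sequences -/

section Blocks

variable {k N : ℕ}

/-- block structure witnessing the past firings at every node. -/
def Blocks (d : Fin N → List (Fin k)) : Prop :=
  ∀ p : List (Fin k), ∃ b : Fin N → ℕ,
    (∀ i i' (j j' : Fin k), ChExt d p j i → ChExt d p j' i' → b i = b i' →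
      (i < i' ↔ j < j')) ∧
    (∀ i (j j' : Fin k), ChExt d p j i → ∃ i', ChExt d p j' i' ∧ b i' = b i)

lemma concat_prefix_concat {p q : List (Fin k)} {j j' : Fin k}
    (h : p ++ [j] <+: q ++ [j']) : p ++ [j] <+: q ∨ (p = q ∧ j = j') := by
  rcases List.prefix_concat_iff.mp h with h1 | h1
  · right
    obtain ⟨h2, h3⟩ := List.append_inj' h1 (by simp)
    exact ⟨h2, by simpa using h3⟩
  · left; exact h1

lemma not_concat_prefix_self (q : List (Fin k)) (j : Fin k) : ¬ (q ++ [j] <+: q) := by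
  intro h
  have := h.length_le
  simp at this

lemma chext_def {d : Fin N → List (Fin k)} {p : List (Fin k)} {j : Fin k} {i : Fin N} :
    ChExt d p j i ↔ p ++ [j] <+: d i := Iff.rfl

lemma blocks_nil : Blocks (fun _ : Fin N => ([] : List (Fin k))) := by
  intro p
  refine ⟨fun _ => 0, ?_, ?_⟩
  · intro i i' j j' h1
    exact absurd (h1.length_le) (by simp)
  · intro i j j' h1
    exact absurd (h1.length_le) (by simp)

lemma inv_step (hk : 0 < k) {c c' : Fin N → ℕ} (hf : FireStep k N c c')
    {d : Fin N → List (Fin k)} (hc : c = toV k ∘ d) (hB : Blocks d) :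
    ∃ d', c' = toV k ∘ d' ∧ Blocks d' := by
  obtain ⟨v, t, ht, hv, hv', hrest⟩ := hf
  set q : List (Fin k) := d (t ⟨0, hk⟩) with hq
  have hQ : ∀ j, d (t j) = q := by
    intro j
    apply toV_injective k
    have h1 : toV k (d (t j)) = c (t j) := by rw [hc]; rfl
    have h2 : toV k q = c (t ⟨0, hk⟩) := by rw [hc]; rfl
    rw [h1, h2, hv, hv]
  have hvq : toV k q = v := by
    have h2 : toV k q = c (t ⟨0, hk⟩) := by rw [hc]; rfl
    rw [h2, hv]
  classical
  have hch : ∀ (j : Fin k) (h : ∃ j', t j' = t j), h.choose = j :=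
    fun j h => ht.injective h.choose_spec
  refine ⟨fun i => if h : ∃ j, t j = i then q ++ [h.choose] else d i, ?_, ?_⟩
  · funext i
    by_cases h : ∃ j, t j = i
    · obtain ⟨j, rfl⟩ := h
      simp only [Function.comp_apply]
      rw [dif_pos (⟨j, rfl⟩ : ∃ j', t j' = t j), hch j, toV_concat, hvq, hv' j]
    · simp only [Function.comp_apply, dif_neg h]
      rw [hrest i (by push_neg at h; exact fun j => Ne.symm (h j)), hc]
      rfl
  · set d' : Fin N → List (Fin k) :=
      fun i => if h : ∃ j, t j = i then q ++ [h.choose] else d i with hd'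
    have hd'moved : ∀ j, d' (t j) = q ++ [j] := by
      intro j
      show (if h : ∃ j', t j' = t j then q ++ [h.choose] else d (t j)) = q ++ [j]
      rw [dif_pos (⟨j, rfl⟩ : ∃ j', t j' = t j), hch j]
    have hd'un : ∀ i, (∀ j, t j ≠ i) → d' i = d i := by
      intro i hi
      show (if h : ∃ j, t j = i then q ++ [h.choose] else d i) = d i
      rw [dif_neg (by push_neg; exact hi : ¬ ∃ j, t j = i)]
    intro p
    by_cases hpq : p = q
    · subst hpq
      obtain ⟨b, hb1, hb2⟩ := hB q
      set S : ℕ := univ.sup b + 1 with hS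
      set b' : Fin N → ℕ := fun i => if ∃ j0, t j0 = i then S else b i with hb'
      have hb'moved : ∀ i, (∃ j0, t j0 = i) → b' i = S := by
        intro i hi
        show (if ∃ j0, t j0 = i then S else b i) = S
        exact if_pos hi
      have hb'un : ∀ i, ¬ (∃ j0, t j0 = i) → b' i = b i := by
        intro i hi
        show (if ∃ j0, t j0 = i then S else b i) = b i
        exact if_neg hi
      refine ⟨b', ?_, ?_⟩
      · intro i i' j j' h1 h2 hbb
        by_cases hmi : ∃ j0, t j0 = i <;> by_cases hmi' : ∃ j0, t j0 = i'
        · obtain ⟨j0, rfl⟩ := hmi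
          obtain ⟨j0', rfl⟩ := hmi'
          have e1 : j = j0 := by
            rw [chext_def, hd'moved j0] at h1
            rcases concat_prefix_concat h1 with h | h
            · exact absurd h (not_concat_prefix_self q j)
            · exact h.2
          have e2 : j' = j0' := by
            rw [chext_def, hd'moved j0'] at h2
            rcases concat_prefix_concat h2 with h | h
            · exact absurd h (not_concat_prefix_self q j')
            · exact h.2
          subst e1; subst e2
          exact ⟨fun hlt => ht.lt_iff_lt.mp hlt, fun hlt => ht hlt⟩
        · exfalso
          rw [hb'moved i hmi, hb'un i' hmi'] at hbb
          have : b i' ≤ univ.sup b := Finset.le_sup (mem_univ i')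
          omega
        · exfalso
          rw [hb'un i hmi, hb'moved i' hmi'] at hbb
          have : b i ≤ univ.sup b := Finset.le_sup (mem_univ i)
          omega
        · have e1 : ChExt d q j i := by
            rw [chext_def, hd'un i (fun j0 hj0 => hmi ⟨j0, hj0⟩)] at h1
            exact h1
          have e2 : ChExt d q j' i' := by
            rw [chext_def, hd'un i' (fun j0 hj0 => hmi' ⟨j0, hj0⟩)] at h2
            exact h2
          rw [hb'un i hmi, hb'un i' hmi'] at hbb
          exact hb1 i i' j j' e1 e2 hbb
      · intro i j j' h1
        by_cases hmi : ∃ j0, t j0 = i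
        · refine ⟨t j', ?_, ?_⟩
          · rw [chext_def, hd'moved j']
          · rw [hb'moved _ ⟨j', rfl⟩, hb'moved i hmi]
        · have e1 : ChExt d q j i := by
            rw [chext_def, hd'un i (fun j0 hj0 => hmi ⟨j0, hj0⟩)] at h1
            exact h1
          obtain ⟨i'', hi''1, hi''2⟩ := hb2 i j j' e1
          have hun : ¬ ∃ j0, t j0 = i'' := by
            rintro ⟨j0, hj0⟩
            rw [chext_def, ← hj0, hQ j0] at hi''1
            exact not_concat_prefix_self q j' hi''1
          refine ⟨i'', ?_, ?_⟩
          · rw [chext_def, hd'un i'' (fun j0 hj0 => hun ⟨j0, hj0⟩)]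
            exact hi''1
          · rw [hb'un i'' hun, hb'un i hmi, hi''2]
    · obtain ⟨b, hb1, hb2⟩ := hB p
      have hiff : ∀ i (j : Fin k), ChExt d' p j i ↔ ChExt d p j i := by
        intro i j
        by_cases hmi : ∃ j0, t j0 = i
        · obtain ⟨j0, rfl⟩ := hmi
          rw [chext_def, chext_def, hQ j0, hd'moved j0]
          constructor
          · intro h1
            rcases concat_prefix_concat h1 with h | h
            · exact h
            · exact absurd h.1 hpq
          · intro h1
            exact h1.trans (List.prefix_append q [j0])
        · rw [chext_def, chext_def, hd'un i (fun j0 hj0 => hmi ⟨j0, hj0⟩)]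
      refine ⟨b, ?_, ?_⟩
      · intro i i' j j' h1 h2 hbb
        exact hb1 i i' j j' ((hiff i j).mp h1) ((hiff i' j').mp h2) hbb
      · intro i j j' h1
        obtain ⟨i'', h3, h4⟩ := hb2 i j j' ((hiff i j).mp h1)
        exact ⟨i'', (hiff i'' j').mpr h3, h4⟩

lemma reachable_inv (hk : 0 < k) {c : Fin N → ℕ}
    (h : Relation.ReflTransGen (FireStep k N) (fun _ => 1) c) :
    ∃ d : Fin N → List (Fin k), c = toV k ∘ d ∧ Blocks d := by
  induction h with
  | refl => exact ⟨fun _ => [], rfl, blocks_nil⟩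
  | tail _ hstep ih =>
    obtain ⟨d, hc, hB⟩ := ih
    exact inv_step hk hstep hc hB

end Blocks

/-! ### From stable reachable configurations to admissible arrays -/

section Extract

variable {k N : ℕ} {d : Fin N → List (Fin k)}

lemma prefix_trichotomy (p l : List (Fin k)) :
    p <+: l ↔ l = p ∨ ∃ x : Fin k, p ++ [x] <+: l := by
  constructor
  · rintro ⟨s, rfl⟩
    cases s with
    | nil => left; simp
    | cons x s' => right; exact ⟨x, s', by simp⟩
  · rintro (rfl | ⟨x, h⟩)
    · exact List.prefix_refl _
    · exact (List.prefix_append p [x]).trans h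

lemma prefix_digit_unique {p l : List (Fin k)} {j j' : Fin k}
    (h1 : p ++ [j] <+: l) (h2 : p ++ [j'] <+: l) : j = j' := by
  have := List.prefix_of_prefix_length_le h1 h2 (by simp)
  have h3 := this.eq_of_length (by simp)
  simpa using (List.append_inj' h3 (by simp)).2

lemma ecard_le (hB : Blocks d) (p : List (Fin k)) (j j' : Fin k) :
    (univ.filter (fun i => ChExt d p j i)).card ≤
      (univ.filter (fun i => ChExt d p j' i)).card := by
  classical
  obtain ⟨b, hb1, hb2⟩ := hB p
  set f : Fin N → Fin N := fun i => if h : ChExt d p j i then (hb2 i j j' h).choose else i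
    with hf
  have hfspec : ∀ i (h : ChExt d p j i), ChExt d p j' (f i) ∧ b (f i) = b i := by
    intro i h
    have : f i = (hb2 i j j' h).choose := dif_pos h
    rw [this]
    exact (hb2 i j j' h).choose_spec
  apply card_le_card_of_injOn f
  · intro i hi
    rw [Finset.mem_coe, mem_filter] at hi ⊢
    exact ⟨mem_univ _, (hfspec i hi.2).1⟩
  · intro i1 h1 i2 h2 hff
    simp only [coe_filter, Set.mem_setOf_eq, mem_univ, true_and] at h1 h2
    have s1 := hfspec i1 h1
    have s2 := hfspec i2 h2
    have hbb : b i1 = b i2 := by rw [← s1.2, ← s2.2, hff]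
    have e1 := hb1 i1 i2 j j h1 h2 hbb
    have e2 := hb1 i2 i1 j j h2 h1 hbb.symm
    have : ¬ i1 < i2 := fun hc => lt_irrefl j (e1.mp hc)
    have : ¬ i2 < i1 := fun hc => lt_irrefl j (e2.mp hc)
    omega

lemma ecard_eq (hB : Blocks d) (p : List (Fin k)) (j j' : Fin k) :
    (univ.filter (fun i => ChExt d p j i)).card =
      (univ.filter (fun i => ChExt d p j' i)).card :=
  le_antisymm (ecard_le hB p j j') (ecard_le hB p j' j)

lemma tcard_decomp (hk : 0 < k) (hB : Blocks d) (p : List (Fin k)) :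
    (univ.filter (fun i => p <+: d i)).card =
      (univ.filter (fun i => d i = p)).card +
        k * (univ.filter (fun i => ChExt d p ⟨0, hk⟩ i)).card := by
  classical
  have hunion : univ.filter (fun i => p <+: d i) =
      univ.filter (fun i => d i = p) ∪
        Finset.univ.biUnion (fun j : Fin k => univ.filter (fun i => ChExt d p j i)) := by
    ext i
    simp only [mem_filter, mem_univ, true_and, mem_union, mem_biUnion]
    rw [prefix_trichotomy]
    constructor
    · rintro (h | ⟨x, h⟩)
      · exact Or.inl h
      · exact Or.inr ⟨x, h⟩
    · rintro (h | ⟨x, h⟩)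
      · exact Or.inl h
      · exact Or.inr ⟨x, h⟩
  have hdisj : Disjoint (univ.filter (fun i => d i = p))
      (Finset.univ.biUnion (fun j : Fin k => univ.filter (fun i => ChExt d p j i))) := by
    rw [Finset.disjoint_left]
    intro i hi hic
    rw [mem_filter] at hi
    rw [mem_biUnion] at hic
    obtain ⟨j, _, hj⟩ := hic
    rw [mem_filter] at hj
    have := hj.2
    rw [chext_def, hi.2] at this
    exact not_concat_prefix_self p j this
  have hpair : ∀ j1 ∈ (univ : Finset (Fin k)), ∀ j2 ∈ (univ : Finset (Fin k)), j1 ≠ j2 →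
      Disjoint (univ.filter (fun i => ChExt d p j1 i))
        (univ.filter (fun i => ChExt d p j2 i)) := by
    intro j1 _ j2 _ hne
    rw [Finset.disjoint_left]
    intro i hi1 hi2
    rw [mem_filter] at hi1 hi2
    exact hne (prefix_digit_unique hi1.2 hi2.2)
  rw [hunion, Finset.card_union_of_disjoint hdisj, Finset.card_biUnion hpair]
  congr 1
  have : ∀ j : Fin k, (univ.filter (fun i => ChExt d p j i)).card =
      (univ.filter (fun i => ChExt d p ⟨0, hk⟩ i)).card := fun j => ecard_eq hB p j _
  rw [Finset.sum_congr rfl (fun j _ => this j), Finset.sum_const, Finset.card_univ,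
    Fintype.card_fin, smul_eq_mul]

variable {ℓ : ℕ}

lemma tcard (hk : 2 ≤ k) (hB : Blocks d) (hN : N = k ^ ℓ)
    (hstab : ∀ v : ℕ, (univ.filter (fun i => toV k (d i) = v)).card < k) :
    ∀ r, r ≤ ℓ → ∀ p : List (Fin k), p.length = r →
      (univ.filter (fun i => p <+: d i)).card = k ^ (ℓ - r) := by
  intro r
  induction r with
  | zero =>
    intro _ p hp
    rw [List.length_eq_zero_iff.mp hp]
    have : univ.filter (fun i : Fin N => [] <+: d i) = univ :=
      Finset.filter_true_of_mem (fun i _ => List.nil_prefix)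
    rw [this, Finset.card_univ, Fintype.card_fin, hN]
    simp
  | succ r ih =>
    intro hr p hp
    rcases List.eq_nil_or_concat p with rfl | ⟨q, x, rfl⟩
    · simp at hp
    · simp only [List.concat_eq_append] at hp ⊢
      have hq : q.length = r := by simpa using hp
      have h0k : 0 < k := by omega
      have hT := ih (by omega) q hq
      have hdec := tcard_decomp h0k hB q
      have hAlt : (univ.filter (fun i => d i = q)).card < k := by
        have : univ.filter (fun i => d i = q) =
            univ.filter (fun i => toV k (d i) = toV k q) := by
          apply Finset.filter_congr
          intro i _
          exact ⟨fun h => by rw [h], fun h => toV_injective k h⟩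
        rw [this]
        exact hstab (toV k q)
      -- the target count over all digits are equal; identify with digit x
      have hEx : (univ.filter (fun i => (q ++ [x]) <+: d i)).card =
          (univ.filter (fun i => ChExt d q ⟨0, h0k⟩ i)).card := by
        have h1 : univ.filter (fun i : Fin N => (q ++ [x]) <+: d i) =
            univ.filter (fun i => ChExt d q x i) :=
          Finset.filter_congr (fun i _ => Iff.rfl)
        rw [h1]
        exact ecard_eq hB q x ⟨0, h0k⟩
      -- arithmetic
      have hpow : k ^ (ℓ - r) = k * k ^ (ℓ - (r + 1)) := by
        rw [← pow_succ']
        congr 1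
        omega
      rw [hT] at hdec
      set a := (univ.filter (fun i => d i = q)).card
      set u := (univ.filter (fun i => ChExt d q (⟨0, h0k⟩ : Fin k) i)).card
      have hdvd : k ∣ a := by
        have h1 : k ∣ k * k ^ (ℓ - (r + 1)) := Dvd.intro _ rfl
        have h2 : k ∣ k * u := Dvd.intro _ rfl
        have : a = k * k ^ (ℓ - (r + 1)) - k * u := by omega
        rw [this]
        exact Nat.dvd_sub h1 h2
      have ha0 : a = 0 := Nat.eq_zero_of_dvd_of_lt hdvd hAlt
      have : k * u = k * k ^ (ℓ - (r + 1)) := by omega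
      have hu : u = k ^ (ℓ - (r + 1)) := Nat.eq_of_mul_eq_mul_left (by omega) this
      rw [hEx, hu]

lemma acard_zero (hk : 2 ≤ k) (hB : Blocks d) (hN : N = k ^ ℓ)
    (hstab : ∀ v : ℕ, (univ.filter (fun i => toV k (d i) = v)).card < k) :
    ∀ p : List (Fin k), p.length < ℓ → (univ.filter (fun i => d i = p)).card = 0 := by
  intro p hp
  have h0k : 0 < k := by omega
  have hdec := tcard_decomp h0k hB p
  have hT := tcard hk hB hN hstab p.length (by omega) p rfl
  have hE := tcard hk hB hN hstab (p.length + 1) (by omega)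
    (p ++ [(⟨0, h0k⟩ : Fin k)]) (by simp)
  have hE' : (univ.filter (fun i => ChExt d p (⟨0, h0k⟩ : Fin k) i)).card =
      k ^ (ℓ - (p.length + 1)) := by
    rw [← hE]
    congr 1
    exact Finset.filter_congr (fun i _ => Iff.rfl)
  rw [hT, hE'] at hdec
  have hpow : k ^ (ℓ - p.length) = k * k ^ (ℓ - (p.length + 1)) := by
    rw [← pow_succ']
    congr 1
    omega
  rw [hpow] at hdec
  generalize hZ : k * k ^ (ℓ - (p.length + 1)) = Z at hdec
  omega

lemma len_eq (hk : 2 ≤ k) (hB : Blocks d) (hN : N = k ^ ℓ)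
    (hstab : ∀ v : ℕ, (univ.filter (fun i => toV k (d i) = v)).card < k) :
    ∀ i, (d i).length = ℓ := by
  intro i
  by_contra hne
  rcases Nat.lt_or_ge (d i).length ℓ with hlt | hge
  · have h := acard_zero hk hB hN hstab (d i) hlt
    have hmem : i ∈ univ.filter (fun i' => d i' = d i) := mem_filter.mpr ⟨mem_univ _, rfl⟩
    rw [Finset.card_eq_zero.mp h] at hmem
    simp at hmem
  · have hgt : ℓ < (d i).length := by omega
    have hplen : ((d i).take ℓ).length = ℓ := by
      rw [List.length_take]
      omega
    have hT := tcard hk hB hN hstab ℓ le_rfl ((d i).take ℓ) hplen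
    rw [Nat.sub_self, pow_zero] at hT
    have ht1 : (d i).take (ℓ + 1) = (d i).take ℓ ++ [(d i)[ℓ]] := by
      rw [List.take_succ]
      congr 1
      rw [List.getElem?_eq_getElem hgt]
      rfl
    have hext : ChExt d ((d i).take ℓ) ((d i)[ℓ]) i := by
      rw [chext_def, ← ht1]
      exact List.take_prefix _ _
    obtain ⟨j', hj'⟩ := Fintype.exists_ne_of_one_lt_card
      (by rw [Fintype.card_fin]; omega : 1 < Fintype.card (Fin k)) ((d i)[ℓ])
    obtain ⟨b, hb1, hb2⟩ := hB ((d i).take ℓ)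
    obtain ⟨i', hi'1, hi'2⟩ := hb2 i ((d i)[ℓ]) j' hext
    have hmemi : i ∈ univ.filter (fun i'' => (d i).take ℓ <+: d i'') :=
      mem_filter.mpr ⟨mem_univ _, List.take_prefix _ _⟩
    have hmemi' : i' ∈ univ.filter (fun i'' => (d i).take ℓ <+: d i'') :=
      mem_filter.mpr ⟨mem_univ _, (List.prefix_append _ [j']).trans hi'1⟩
    have hii' : i = i' := by
      have hcard := Finset.card_le_one.mp (le_of_eq hT)
      exact hcard i hmemi i' hmemi' |>.symm ▸ (hcard i hmemi i' hmemi')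
    rw [← hii'] at hi'1
    exact hj' (prefix_digit_unique hi'1 hext)

lemma dom_of_blocks (hB : Blocks d) (p : List (Fin k)) (t n : ℕ) (hn : n + 1 < k) :
    (univ.filter (fun i : Fin N => (i : ℕ) < t ∧ ChExtN d p (n + 1) i)).card ≤
      (univ.filter (fun i : Fin N => (i : ℕ) < t ∧ ChExtN d p n i)).card := by
  classical
  obtain ⟨b, hb1, hb2⟩ := hB p
  set j1 : Fin k := ⟨n + 1, hn⟩ with hj1
  set j0 : Fin k := ⟨n, by omega⟩ with hj0
  have hiff : ∀ (m : ℕ) (hm : m < k) (i : Fin N), ChExtN d p m i ↔ ChExt d p ⟨m, hm⟩ i := by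
    intro m hm i
    constructor
    · rintro ⟨j, hj, hpre⟩
      have : j = ⟨m, hm⟩ := Fin.ext hj
      subst this
      exact hpre
    · intro h
      exact ⟨⟨m, hm⟩, rfl, h⟩
  set f : Fin N → Fin N := fun i => if h : ChExt d p j1 i then (hb2 i j1 j0 h).choose else i
    with hf
  have hfspec : ∀ i (h : ChExt d p j1 i), ChExt d p j0 (f i) ∧ b (f i) = b i := by
    intro i h
    have : f i = (hb2 i j1 j0 h).choose := dif_pos h
    rw [this]
    exact (hb2 i j1 j0 h).choose_spec
  have hflt : ∀ i (h : ChExt d p j1 i), f i < i := by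
    intro i h
    have hs := hfspec i h
    refine (hb1 (f i) i j0 j1 hs.1 h hs.2).mpr ?_
    show (n : ℕ) < (n + 1 : ℕ)
    omega
  apply card_le_card_of_injOn f
  · intro i hi
    rw [Finset.mem_coe, mem_filter] at hi ⊢
    have hext : ChExt d p j1 i := (hiff (n + 1) hn i).mp hi.2.2
    have hs := hfspec i hext
    have hlt := hflt i hext
    refine ⟨mem_univ _, ?_, (hiff n (by omega) (f i)).mpr hs.1⟩
    have : (f i : ℕ) < (i : ℕ) := hlt
    omega
  · intro i1 h1 i2 h2 hff
    simp only [coe_filter, Set.mem_setOf_eq, mem_univ, true_and] at h1 h2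
    have hext1 : ChExt d p j1 i1 := (hiff (n + 1) hn i1).mp h1.2
    have hext2 : ChExt d p j1 i2 := (hiff (n + 1) hn i2).mp h2.2
    have s1 := hfspec i1 hext1
    have s2 := hfspec i2 hext2
    have hbb : b i1 = b i2 := by rw [← s1.2, ← s2.2, hff]
    have e1 := hb1 i1 i2 j1 j1 hext1 hext2 hbb
    have e2 := hb1 i2 i1 j1 j1 hext2 hext1 hbb.symm
    have n1 : ¬ i1 < i2 := fun hc => lt_irrefl j1 (e1.mp hc)
    have n2 : ¬ i2 < i1 := fun hc => lt_irrefl j1 (e2.mp hc)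
    omega

/-- the main extraction: a stable configuration with block structure is admissible. -/
lemma stable_to_adm (hk : 2 ≤ k) (hB : Blocks d) (hN : N = k ^ ℓ)
    (hstab : ∀ v : ℕ, (univ.filter (fun i => toV k (d i) = v)).card < k) :
    Adm k ℓ N d := by
  refine ⟨len_eq hk hB hN hstab, fun p hp => ⟨?_, fun t n hn => dom_of_blocks hB p t n hn⟩⟩
  intro j
  have hE := tcard hk hB hN hstab (p.length + 1) (by omega) (p ++ [j]) (by simp)
  have h1 : univ.filter (fun i => ChExt d p j i) =
      univ.filter (fun i : Fin N => (p ++ [j]) <+: d i) :=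
    Finset.filter_congr (fun i _ => Iff.rfl)
  rw [h1, hE, Nat.sub_sub]

end Extract

/-! ### Stability of admissible configurations -/

section AdmStable

variable {k N ℓ : ℕ} {d : Fin N → List (Fin k)}

lemma adm_tcard (hN : N = k ^ ℓ) (h : Adm k ℓ N d) :
    ∀ r, r ≤ ℓ → ∀ p : List (Fin k), p.length = r →
      (univ.filter (fun i => p <+: d i)).card = k ^ (ℓ - r) := by
  intro r
  induction r with
  | zero =>
    intro _ p hp
    rw [List.length_eq_zero_iff.mp hp]
    have : univ.filter (fun i : Fin N => [] <+: d i) = univ :=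
      Finset.filter_true_of_mem (fun i _ => List.nil_prefix)
    rw [this, Finset.card_univ, Fintype.card_fin, hN]
    simp
  | succ r ih =>
    intro hr p hp
    rcases List.eq_nil_or_concat p with rfl | ⟨q, x, rfl⟩
    · simp at hp
    · simp only [List.concat_eq_append] at hp ⊢
      have hq : q.length = r := by simpa using hp
      have hcnt := (h.2 q (by omega)).1 x
      have h1 : univ.filter (fun i : Fin N => (q ++ [x]) <+: d i) =
          univ.filter (fun i => ChExt d q x i) :=
        Finset.filter_congr (fun i _ => Iff.rfl)
      rw [h1, hcnt, hq, Nat.sub_sub]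

lemma adm_stable (hk : 2 ≤ k) (hN : N = k ^ ℓ) (h : Adm k ℓ N d) :
    ∀ v : ℕ, (univ.filter (fun i => toV k (d i) = v)).card < k := by
  intro v
  by_cases hex : ∃ i₀ : Fin N, toV k (d i₀) = v
  · obtain ⟨i₀, rfl⟩ := hex
    have h1 : univ.filter (fun i => toV k (d i) = toV k (d i₀)) =
        univ.filter (fun i => d i₀ <+: d i) := by
      apply Finset.filter_congr
      intro i _
      constructor
      · intro hh
        rw [toV_injective k hh]
      · intro hh
        rw [hh.eq_of_length (by rw [h.1 i, h.1 i₀])]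
    have h2 := adm_tcard hN h ℓ le_rfl (d i₀) (h.1 i₀)
    rw [h1, h2, Nat.sub_self, pow_zero]
    omega
  · push_neg at hex
    have : univ.filter (fun i => toV k (d i) = v) = ∅ := by
      apply Finset.filter_false_of_mem
      intro i _
      exact hex i
    rw [this]
    simp
    omega

end AdmStable

/-! ### Gluing small admissible arrays -/

section Glue

variable {k ℓ N : ℕ} (w : Fin N → Fin k)
  (hcnt : ∀ j : Fin k, (univ.filter (fun i => w i = j)).card = k ^ ℓ)
  (f : Fin k → (Fin (k ^ ℓ) → List (Fin k)))

/-- glue the small arrays along the fibers of `w`. -/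
noncomputable def glueCfg : Fin N → List (Fin k) :=
  fun i => w i :: f (w i)
    (((univ.filter (fun i' => w i' = w i)).orderIsoOfFin (hcnt (w i))).symm ⟨i, by simp⟩)

lemma glueCfg_head (i : Fin N) : ∃ x : Fin (k ^ ℓ), glueCfg w hcnt f i = w i :: f (w i) x :=
  ⟨_, rfl⟩

lemma glueCfg_apply' (i : Fin N) (j : Fin k) (hw : w i = j) :
    glueCfg w hcnt f i =
      j :: f j (((univ.filter (fun i' => w i' = j)).orderIsoOfFin (hcnt j)).symm
        ⟨i, by simp [hw]⟩) := by
  subst hw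
  rfl

lemma glueCfg_apply (j : Fin k) (x : Fin (k ^ ℓ)) :
    glueCfg w hcnt f (((univ.filter (fun i' => w i' = j)).orderIsoOfFin (hcnt j) x : Fin N))
      = j :: f j x := by
  have hw : w (((univ.filter (fun i' => w i' = j)).orderIsoOfFin (hcnt j) x : Fin N)) = j :=
    (mem_filter.mp ((univ.filter (fun i' => w i' = j)).orderIsoOfFin (hcnt j) x).2).2
  rw [glueCfg_apply' w hcnt f _ j hw]
  congr 1
  have h2 : (⟨(((univ.filter (fun i' => w i' = j)).orderIsoOfFin (hcnt j) x : Fin N)), by simp [hw]⟩ :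
      {y // y ∈ univ.filter (fun i' => w i' = j)}) =
      (univ.filter (fun i' => w i' = j)).orderIsoOfFin (hcnt j) x := Subtype.ext rfl
  rw [h2, OrderIso.symm_apply_apply]

lemma chextN_iff_of_eq {M : ℕ} {d : Fin M → List (Fin k)} {i : Fin M} {l : List (Fin k)}
    (h : d i = l) (p : List (Fin k)) (nn : ℕ) :
    ChExtN d p nn i ↔ ∃ j0 : Fin k, (j0 : ℕ) = nn ∧ p ++ [j0] <+: l := by
  subst h
  exact Iff.rfl

lemma glue_ext_nil (j : Fin k) (i : Fin N) :
    ChExt (glueCfg w hcnt f) [] j i ↔ w i = j := by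
  obtain ⟨x, hx⟩ := glueCfg_head w hcnt f i
  rw [chext_def, hx, List.nil_append]
  constructor
  · intro h
    have := (List.cons_prefix_cons.mp h).1
    exact this.symm
  · rintro rfl
    exact List.cons_prefix_cons.mpr ⟨rfl, List.nil_prefix⟩

lemma glue_extN_nil (n : ℕ) (i : Fin N) :
    ChExtN (glueCfg w hcnt f) [] n i ↔ (w i : ℕ) = n := by
  constructor
  · rintro ⟨j, rfl, hpre⟩
    rw [(glue_ext_nil w hcnt f j i).mp hpre]
  · intro h
    exact ⟨w i, h, (glue_ext_nil w hcnt f (w i) i).mpr rfl⟩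

lemma glue_ext_cons (j : Fin k) (q : List (Fin k)) (j' : Fin k) (i : Fin N) :
    ChExt (glueCfg w hcnt f) (j :: q) j' i ↔
      w i = j ∧ q ++ [j'] <+: f (w i)
        (((univ.filter (fun i' => w i' = w i)).orderIsoOfFin (hcnt (w i))).symm ⟨i, by simp⟩) := by
  rw [chext_def]
  show (j :: (q ++ [j'])) <+: glueCfg w hcnt f i ↔ _
  rw [show glueCfg w hcnt f i = w i :: f (w i)
    (((univ.filter (fun i' => w i' = w i)).orderIsoOfFin (hcnt (w i))).symm ⟨i, by simp⟩) from rfl]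
  rw [List.cons_prefix_cons]
  exact and_congr_left (fun _ => eq_comm)

lemma glue_extN_cons (j : Fin k) (q : List (Fin k)) (n : ℕ) (i : Fin N) :
    ChExtN (glueCfg w hcnt f) (j :: q) n i ↔
      w i = j ∧ ChExtN (f (w i)) q n
        (((univ.filter (fun i' => w i' = w i)).orderIsoOfFin (hcnt (w i))).symm ⟨i, by simp⟩) := by
  constructor
  · rintro ⟨j0, rfl, hpre⟩
    have := (glue_ext_cons w hcnt f j q j0 i).mp hpre
    exact ⟨this.1, j0, rfl, this.2⟩
  · rintro ⟨h1, j0, rfl, hpre⟩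
    exact ⟨j0, rfl, (glue_ext_cons w hcnt f j q j0 i).mpr ⟨h1, hpre⟩⟩

lemma adm_glue (hdom : Dom w) (hf : ∀ j, Adm k ℓ (k ^ ℓ) (f j)) :
    Adm k (ℓ + 1) N (glueCfg w hcnt f) := by
  constructor
  · intro i
    obtain ⟨x, hx⟩ := glueCfg_head w hcnt f i
    rw [hx, List.length_cons, (hf (w i)).1 x]
  · intro p hp
    match p with
    | [] =>
      constructor
      · intro j
        have h1 : univ.filter (fun i => ChExt (glueCfg w hcnt f) [] j i) =
            univ.filter (fun i => w i = j) :=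
          Finset.filter_congr (fun i _ => glue_ext_nil w hcnt f j i)
        rw [h1, hcnt j]
        simp
      · intro t n hn
        have h1 : ∀ nn : ℕ, univ.filter (fun i : Fin N =>
            (i : ℕ) < t ∧ ChExtN (glueCfg w hcnt f) [] nn i) =
            univ.filter (fun i : Fin N => (i : ℕ) < t ∧ (w i : ℕ) = nn) := by
          intro nn
          exact Finset.filter_congr
            (fun i _ => and_congr_right (fun _ => glue_extN_nil w hcnt f nn i))
        rw [h1, h1]
        exact hdom t n hn
    | j :: q =>
      have hq : q.length < ℓ := by
        have := hp
        simp only [List.length_cons] at this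
        omega
      have hQsub : ∀ (P : Fin (k ^ ℓ) → Prop) (i : Fin N),
          (w i = j ∧ P (((univ.filter (fun i' => w i' = w i)).orderIsoOfFin
            (hcnt (w i))).symm ⟨i, by simp⟩)) → i ∈ univ.filter (fun i' => w i' = j) := by
        intro P i hi
        simp [hi.1]
      have heq : ∀ x : Fin (k ^ ℓ),
          (((univ.filter (fun i' => w i' = j)).orderIsoOfFin (hcnt j)).symm
            ⟨(((univ.filter (fun i' => w i' = j)).orderIsoOfFin (hcnt j) x : Fin N)), by simp⟩) = x := by
        intro x
        have h2 : (⟨(((univ.filter (fun i' => w i' = j)).orderIsoOfFin (hcnt j) x : Fin N)), by simp⟩ :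
            {y // y ∈ univ.filter (fun i' => w i' = j)}) =
            (univ.filter (fun i' => w i' = j)).orderIsoOfFin (hcnt j) x := Subtype.ext rfl
        rw [h2, OrderIso.symm_apply_apply]
      constructor
      · intro j'
        have hiff : ∀ x : Fin (k ^ ℓ),
            ChExt (glueCfg w hcnt f)  (j :: q) j'
              (((univ.filter (fun i' => w i' = j)).orderIsoOfFin (hcnt j) x : Fin N)) ↔
            ChExt (f j) q j' x := by
          intro x
          rw [chext_def, glueCfg_apply w hcnt f j x]
          show (j :: (q ++ [j'])) <+: j :: f j x ↔ _
          rw [List.cons_prefix_cons]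
          simp [chext_def]
        have hsub : ∀ i, ChExt (glueCfg w hcnt f) (j :: q) j' i →
            i ∈ univ.filter (fun i' => w i' = j) := by
          intro i hi
          have := (glue_ext_cons w hcnt f j q j' i).mp hi
          simp [this.1]
        have hcard := card_filter_orderIso (hcnt j)
          (fun i => ChExt (glueCfg w hcnt f) (j :: q) j' i) hsub
        rw [← hcard, Finset.filter_congr (fun x _ => hiff x), ((hf j).2 q hq).1 j']
        congr 1
        simp only [List.length_cons]
        omega
      · intro t n hn
        have hcorr : ∀ x : Fin (k ^ ℓ),
            ((x : ℕ) < ((univ.filter (fun i' => w i' = j)).filter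
              (fun i : Fin N => (i : ℕ) < t)).card ↔
            (((univ.filter (fun i' => w i' = j)).orderIsoOfFin (hcnt j) x : Fin N) : ℕ) < t) :=
          fun x => orderIso_lt_iff (hcnt j) t x
        have hiffN : ∀ (nn : ℕ) (x : Fin (k ^ ℓ)),
            ChExtN (glueCfg w hcnt f) (j :: q) nn
              (((univ.filter (fun i' => w i' = j)).orderIsoOfFin (hcnt j) x : Fin N)) ↔
            ChExtN (f j) q nn x := by
          intro nn x
          rw [chextN_iff_of_eq (glueCfg_apply w hcnt f j x) (j :: q) nn]
          constructor
          · rintro ⟨j0, rfl, hpre⟩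
            refine ⟨j0, rfl, ?_⟩
            have : (j :: (q ++ [j0])) <+: j :: f j x := hpre
            exact (List.cons_prefix_cons.mp this).2
          · rintro ⟨j0, rfl, hpre⟩
            refine ⟨j0, rfl, ?_⟩
            show (j :: (q ++ [j0])) <+: j :: f j x
            exact List.cons_prefix_cons.mpr ⟨rfl, hpre⟩
        have hsubN : ∀ (nn : ℕ) i, ChExtN (glueCfg w hcnt f) (j :: q) nn i →
            i ∈ univ.filter (fun i' => w i' = j) := by
          intro nn i hi
          have := (glue_extN_cons w hcnt f j q nn i).mp hi
          simp [this.1]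
        have htrans : ∀ nn : ℕ,
            (univ.filter (fun i : Fin N => (i : ℕ) < t ∧
              ChExtN (glueCfg w hcnt f) (j :: q) nn i)).card =
            (univ.filter (fun x : Fin (k ^ ℓ) =>
              (x : ℕ) < ((univ.filter (fun i' => w i' = j)).filter
                (fun i : Fin N => (i : ℕ) < t)).card ∧ ChExtN (f j) q nn x)).card := by
          intro nn
          rw [← card_filter_orderIso_threshold (hcnt j)
            (fun i => ChExtN (glueCfg w hcnt f) (j :: q) nn i) (hsubN nn) hcorr]
          exact congrArg Finset.card (Finset.filter_congr (fun x _ =>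
            and_congr_right (fun _ => (hiffN nn x))))
        rw [htrans, htrans]
        exact ((hf j).2 q hq).2 _ n hn

end Glue

/-! ### Counting admissible arrays -/


section Counting

variable {k : ℕ}

def AdmSet (k ℓ : ℕ) : Set (Fin (k ^ ℓ) → List (Fin k)) := {d | Adm k ℓ (k ^ ℓ) d}

def CatLike (k ℓ : ℕ) : Set (Fin (k ^ (ℓ + 1)) → Fin k) :=
  {w | (∀ j : Fin k, (univ.filter (fun i => w i = j)).card = k ^ ℓ) ∧ Dom w}

lemma admset_zero_ncard : (AdmSet k 0).ncard = 1 := by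
  have : AdmSet k 0 = {fun _ => []} := by
    ext d
    constructor
    · intro h
      exact adm_zero_eq h
    · rintro rfl
      exact ⟨fun i => rfl, fun p hp => absurd hp (by omega)⟩
  rw [this, Set.ncard_singleton]

lemma orderIsoOfFin_congr {n m : ℕ} {F G : Finset (Fin n)} (h : F = G)
    (hF : F.card = m) (hG : G.card = m) (x : Fin m) :
    (F.orderIsoOfFin hF x : Fin n) = (G.orderIsoOfFin hG x : Fin n) := by
  subst h
  rfl

/-- the recursive structure of admissible arrays. -/
noncomputable def admEquiv (k ℓ : ℕ) :
    ↥(AdmSet k (ℓ + 1)) ≃ ↥(CatLike k ℓ) × (Fin k → ↥(AdmSet k ℓ)) where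
  toFun d :=
    (⟨headw d.2.1, fiber_card d.2.1 d.2, dom_headw d.2.1 d.2⟩,
      fun j => ⟨fun x => (d.1 (((univ.filter (fun i => headw d.2.1 i = j)).orderIsoOfFin
        (fiber_card d.2.1 d.2 j) x : Fin (k ^ (ℓ + 1))))).tail,
        adm_small d.2.1 d.2 j (fiber_card d.2.1 d.2 j)⟩)
  invFun wf :=
    ⟨glueCfg wf.1.1 wf.1.2.1 (fun j => (wf.2 j).1),
      adm_glue wf.1.1 wf.1.2.1 (fun j => (wf.2 j).1) wf.1.2.2 (fun j => (wf.2 j).2)⟩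
  left_inv := by
    rintro ⟨d, hAdm⟩
    apply Subtype.ext
    funext i
    show glueCfg (headw hAdm.1) (fiber_card hAdm.1 hAdm)
      (fun j => fun x => (d (((univ.filter (fun i' => headw hAdm.1 i' = j)).orderIsoOfFin
        (fiber_card hAdm.1 hAdm j) x : Fin (k ^ (ℓ + 1))))).tail) i = d i
    rw [glueCfg_apply' (headw hAdm.1) (fiber_card hAdm.1 hAdm)
      (fun j => fun x => (d (((univ.filter (fun i' => headw hAdm.1 i' = j)).orderIsoOfFin
        (fiber_card hAdm.1 hAdm j) x : Fin (k ^ (ℓ + 1))))).tail) i (headw hAdm.1 i) rfl]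
    show headw hAdm.1 i :: (d (((univ.filter (fun i' => headw hAdm.1 i' = headw hAdm.1 i)).orderIsoOfFin
        (fiber_card hAdm.1 hAdm (headw hAdm.1 i)))
        (((univ.filter (fun i' => headw hAdm.1 i' = headw hAdm.1 i)).orderIsoOfFin
        (fiber_card hAdm.1 hAdm (headw hAdm.1 i))).symm ⟨i, by simp⟩) : Fin (k ^ (ℓ + 1)))).tail = d i
    rw [OrderIso.apply_symm_apply]
    exact (headw_cons hAdm.1 i).symm
  right_inv := by
    rintro ⟨⟨w, hw⟩, f⟩
    have hglue := adm_glue w hw.1 (fun j => (f j).1) hw.2 (fun j => (f j).2)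
    have hhead : ∀ i, headw hglue.1 i = w i := fun i => rfl
    refine Prod.ext (Subtype.ext (funext hhead)) (funext fun j => Subtype.ext (funext fun x => ?_))
    have Feq : univ.filter (fun i => headw hglue.1 i = j) = univ.filter (fun i => w i = j) :=
      Finset.filter_congr (fun i _ => by rw [hhead i])
    show (glueCfg w hw.1 (fun j' => (f j').1)
      (((univ.filter (fun i => headw hglue.1 i = j)).orderIsoOfFin _ x : Fin (k ^ (ℓ + 1))))).tail
        = (f j).1 x
    rw [orderIsoOfFin_congr Feq (fiber_card hglue.1 hglue j) (hw.1 j) x]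
    rw [glueCfg_apply w hw.1 (fun j' => (f j').1) j x]
    rfl

lemma admset_succ_ncard (ℓ : ℕ) :
    (AdmSet k (ℓ + 1)).ncard = (CatLike k ℓ).ncard * (AdmSet k ℓ).ncard ^ k := by
  rw [← Nat.card_coe_set_eq, ← Nat.card_coe_set_eq, ← Nat.card_coe_set_eq,
    Nat.card_congr (admEquiv k ℓ), Nat.card_prod, Nat.card_fun]
  congr 2
  simp [Nat.card_eq_fintype_card]

lemma card_filter_cast {n m : ℕ} (h : n = m) (P : Fin m → Prop) [DecidablePred P] :
    (univ.filter (fun x : Fin n => P (Fin.cast h x))).card = (univ.filter P).card := by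
  subst h
  rfl

lemma finCastCast {n m : ℕ} (h : n = m) (x : Fin m) : Fin.cast h (Fin.cast h.symm x) = x :=
  Fin.ext rfl

lemma catlike_eq_image (ℓ : ℕ) :
    CatLike k ℓ = (fun a : Fin (k * k ^ ℓ) → Fin k =>
      a ∘ Fin.cast (pow_succ' k ℓ)) '' CatalanSet k (k ^ ℓ) := by
  have h : k ^ (ℓ + 1) = k * k ^ ℓ := pow_succ' k ℓ
  ext w
  simp only [Set.mem_image]
  constructor
  · rintro ⟨hcnt, hdom⟩
    refine ⟨w ∘ Fin.cast h.symm, ⟨?_, ?_⟩, ?_⟩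
    · intro v
      have := card_filter_cast h.symm (fun i : Fin (k ^ (ℓ + 1)) => w i = v)
      exact this.trans (hcnt v)
    · intro p j hj
      have h1 := card_filter_cast h.symm
        (fun i : Fin (k ^ (ℓ + 1)) => (i : ℕ) < p ∧ (w i : ℕ) = j + 1)
      have h2 := card_filter_cast h.symm
        (fun i : Fin (k ^ (ℓ + 1)) => (i : ℕ) < p ∧ (w i : ℕ) = j)
      have e1 : (univ.filter (fun x : Fin (k * k ^ ℓ) =>
          (x : ℕ) < p ∧ (((w ∘ Fin.cast h.symm) x : Fin k) : ℕ) = j + 1)).card =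
          (univ.filter (fun i : Fin (k ^ (ℓ + 1)) => (i : ℕ) < p ∧ (w i : ℕ) = j + 1)).card := by
        rw [← h1]
        exact congrArg Finset.card (Finset.filter_congr (fun x _ => Iff.rfl))
      have e2 : (univ.filter (fun x : Fin (k * k ^ ℓ) =>
          (x : ℕ) < p ∧ (((w ∘ Fin.cast h.symm) x : Fin k) : ℕ) = j)).card =
          (univ.filter (fun i : Fin (k ^ (ℓ + 1)) => (i : ℕ) < p ∧ (w i : ℕ) = j)).card := by
        rw [← h2]
        exact congrArg Finset.card (Finset.filter_congr (fun x _ => Iff.rfl))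
      rw [e1, e2]
      exact hdom p j hj
    · funext i
      show w (Fin.cast h.symm (Fin.cast h i)) = w i
      exact congrArg w (Fin.ext rfl)
  · rintro ⟨a, ⟨hcnt, hdom⟩, rfl⟩
    constructor
    · intro v
      have := card_filter_cast h (fun x : Fin (k * k ^ ℓ) => a x = v)
      exact this.trans (hcnt v)
    · intro t n hn
      have h1 := card_filter_cast h
        (fun x : Fin (k * k ^ ℓ) => (x : ℕ) < t ∧ (a x : ℕ) = n + 1)
      have h2 := card_filter_cast h
        (fun x : Fin (k * k ^ ℓ) => (x : ℕ) < t ∧ (a x : ℕ) = n)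
      have e1 : (univ.filter (fun i : Fin (k ^ (ℓ + 1)) =>
          (i : ℕ) < t ∧ (((a ∘ Fin.cast h) i : Fin k) : ℕ) = n + 1)).card =
          (univ.filter (fun x : Fin (k * k ^ ℓ) => (x : ℕ) < t ∧ (a x : ℕ) = n + 1)).card := by
        rw [← h1]
        exact congrArg Finset.card (Finset.filter_congr (fun x _ => Iff.rfl))
      have e2 : (univ.filter (fun i : Fin (k ^ (ℓ + 1)) =>
          (i : ℕ) < t ∧ (((a ∘ Fin.cast h) i : Fin k) : ℕ) = n)).card =
          (univ.filter (fun x : Fin (k * k ^ ℓ) => (x : ℕ) < t ∧ (a x : ℕ) = n)).card := by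
        rw [← h2]
        exact congrArg Finset.card (Finset.filter_congr (fun x _ => Iff.rfl))
      rw [e1, e2]
      exact hdom t n hn

lemma catlike_ncard (ℓ : ℕ) : (CatLike k ℓ).ncard = (CatalanSet k (k ^ ℓ)).ncard := by
  rw [catlike_eq_image]
  apply Set.ncard_image_of_injective
  intro a b hab
  funext x
  have := congrFun hab (Fin.cast (pow_succ' k ℓ).symm x)
  simpa [finCastCast] using this

lemma admset_ncard_prod : ∀ ℓ : ℕ, (AdmSet k ℓ).ncard =
    ∏ i ∈ Finset.range ℓ, (CatalanSet k (k ^ (ℓ - 1 - i))).ncard ^ k ^ i := by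
  intro ℓ
  induction ℓ with
  | zero => simpa using admset_zero_ncard
  | succ ℓ ih =>
    rw [admset_succ_ncard, catlike_ncard, ih, Finset.prod_range_succ']
    simp only [Nat.add_sub_cancel, Nat.sub_zero, pow_zero, pow_one]
    rw [mul_comm]
    congr 1
    rw [← Finset.prod_pow]
    apply Finset.prod_congr rfl
    intro i _
    have he : ℓ - 1 - i = ℓ + 1 - 1 - (i + 1) := by omega
    rw [← pow_mul, he, ← pow_succ]

end Counting

theorem stmt3 (k ℓ : ℕ) (hk : 2 ≤ k) (hℓ : 1 ≤ ℓ) :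
    {c : Fin (k ^ ℓ) → ℕ | Reachable k ℓ c ∧ Stable k (k ^ ℓ) c}.ncard =
      ∏ i ∈ Finset.range ℓ, (CatalanSet k (k ^ (ℓ - 1 - i))).ncard ^ k ^ i := by
  have hinj : Function.Injective (fun d : Fin (k ^ ℓ) → List (Fin k) => toV k ∘ d) :=
    fun d1 d2 h => funext fun i => toV_injective k (congrFun h i)
  have hset : {c : Fin (k ^ ℓ) → ℕ | Reachable k ℓ c ∧ Stable k (k ^ ℓ) c} =
      (fun d => toV k ∘ d) '' (AdmSet k ℓ) := by
    ext c
    simp only [Set.mem_setOf_eq, Set.mem_image]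
    constructor
    · rintro ⟨hr, hs⟩
      obtain ⟨d, rfl, hB⟩ := reachable_inv (by omega : 0 < k) hr
      refine ⟨d, stable_to_adm hk hB rfl (fun v => ?_), rfl⟩
      have h1 := hs v
      exact lt_of_le_of_lt
        (le_of_eq (congrArg Finset.card (Finset.filter_congr fun i _ => Iff.rfl))) h1
    · rintro ⟨d, hAdm, rfl⟩
      refine ⟨adm_reachable d hAdm, fun v => ?_⟩
      have h1 := adm_stable hk rfl hAdm v
      exact lt_of_le_of_lt
        (le_of_eq (congrArg Finset.card (Finset.filter_congr fun i _ => Iff.rfl))) h1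
  rw [hset, Set.ncard_image_of_injective _ hinj, admset_ncard_prod]
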